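/- The difference (ln a_{n+1})/(n+1) − (ln a_n)/n converges to 0 as n → ∞. -/

import Mathlib

open Finset

def E (n : ℕ) : ℕ := ∑ k ∈ Finset.range n, (n-1).choose k * (n+k).choose k

lemma one_le_E {n : ℕ} (hn : 1 ≤ n) : 1 ≤ E n := by
  have h0 : (0:ℕ) ∈ Finset.range n := by simp; omega
  calc 1 = (n-1).choose 0 * (n+0).choose 0 := by simp
    _ ≤ E n := Finset.single_le_sum (f := fun k => (n-1).choose k * (n+k).choose k)
        (fun i _ => Nat.zero_le _) h0

lemma E_mono (n : ℕ) : E n ≤ E (n+1) := by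
  unfold E
  calc ∑ k ∈ range n, (n-1).choose k * (n+k).choose k
      ≤ ∑ k ∈ range n, n.choose k * (n+1+k).choose k := by
        apply Finset.sum_le_sum
        intro k _
        exact Nat.mul_le_mul (Nat.choose_le_choose k (by omega))
          (Nat.choose_le_choose k (by omega))
    _ ≤ ∑ k ∈ range (n+1), n.choose k * (n+1+k).choose k := by
        apply Finset.sum_le_sum_of_subset (by simp)
    _ = E (n+1) := by simp [E]

lemma cb_le_E {n : ℕ} (hn : 1 ≤ n) : (2*n-1).choose (n-1) ≤ E n := by
  have h : (n-1) ∈ Finset.range n := by simp; omega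
  calc (2*n-1).choose (n-1) = (n-1).choose (n-1) * ((n+(n-1)).choose (n-1)) := by
        rw [Nat.choose_self, one_mul]
        congr 1
        omega
    _ ≤ E n := Finset.single_le_sum (f := fun k => (n-1).choose k * (n+k).choose k)
        (fun i _ => Nat.zero_le _) h

lemma four_pow_le {n : ℕ} (hn : 4 ≤ n) : 4^n ≤ 2*n * E n := by
  obtain ⟨m, rfl⟩ : ∃ m, n = m + 1 := ⟨n-1, by omega⟩
  have h1 : 4^(m+1) < (m+1) * Nat.centralBinom (m+1) :=
    Nat.four_pow_lt_mul_centralBinom _ hn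
  have h2 : Nat.centralBinom (m+1) = 2 * (2*(m+1)-1).choose ((m+1)-1) := by
    unfold Nat.centralBinom
    have h3 : 2 * (m+1) = (2*m+1) + 1 := by omega
    rw [h3, Nat.choose_succ_succ']
    have h4 : (2*m+1).choose (m+1) = (2*m+1).choose m := by
      rw [← Nat.choose_symm (by omega)]
      congr 1
      omega
    have h5 : 2*(m+1)-1 = 2*m+1 := by omega
    have h6 : m+1-1 = m := by omega
    rw [h4]
    simp
    omega
  have h7 := cb_le_E (n := m+1) (by omega)
  calc 4^(m+1) ≤ (m+1) * Nat.centralBinom (m+1) := h1.le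
    _ = 2*(m+1) * ((2*(m+1)-1).choose ((m+1)-1)) := by rw [h2]; ring
    _ ≤ 2*(m+1) * E (m+1) := Nat.mul_le_mul_left _ h7

lemma twelve_cube_le {n : ℕ} (hn : 7 ≤ n) : 12 * n^3 ≤ 4^n := by
  induction n with
  | zero => omega
  | succ m ih =>
    rcases Nat.lt_or_ge m 7 with h | h
    · have : m = 6 := by omega
      subst this; norm_num
    · have a1 : 7*m^2 ≤ m^3 := by
        calc 7*m^2 ≤ m*m^2 := Nat.mul_le_mul_right _ h
          _ = m^3 := by ring
      have a2 : 7*m ≤ m^2 := by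
        calc 7*m ≤ m*m := Nat.mul_le_mul_right _ h
          _ = m^2 := by ring
      have h1 : 12 * (m+1)^3 ≤ 2 * (12 * m^3) := by nlinarith [a1, a2, h]
      have h2 := ih (by omega)
      calc 12*(m+1)^3 ≤ 2*(12*m^3) := h1
        _ ≤ 2 * 4^m := by omega
        _ ≤ 4^(m+1) := by rw [pow_succ]; omega

lemma six_sq_le_E {n : ℕ} (hn : 7 ≤ n) : 6 * n^2 ≤ E n := by
  have h1 := four_pow_le (n := n) (by omega)
  have h2 := twelve_cube_le hn
  have h3 : 2*n*(6*n^2) ≤ 2*n*E n := by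
    calc 2*n*(6*n^2) = 12*n^3 := by ring
      _ ≤ 4^n := h2
      _ ≤ 2*n*E n := h1
  exact Nat.le_of_mul_le_mul_left h3 (by omega)

lemma choose_le_two_pow' {m k : ℕ} : m.choose k ≤ 2^m := by
  rcases Nat.lt_or_ge m k with h | h
  · rw [Nat.choose_eq_zero_of_lt h]; positivity
  · calc m.choose k ≤ ∑ i ∈ range (m+1), m.choose i :=
        Finset.single_le_sum (f := fun i => m.choose i) (fun i _ => Nat.zero_le _)
          (by simp; omega)
      _ = 2^m := Nat.sum_range_choose m
    
lemma E_le (n : ℕ) : E n ≤ n * 8^n := by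
  unfold E
  calc ∑ k ∈ range n, (n-1).choose k * (n+k).choose k
      ≤ ∑ k ∈ range n, 8^n := by
        apply Finset.sum_le_sum
        intro k hk
        simp only [Finset.mem_range] at hk
        calc (n-1).choose k * (n+k).choose k ≤ 2^(n-1) * 2^(n+k) :=
              Nat.mul_le_mul choose_le_two_pow' choose_le_two_pow'
          _ ≤ 2^n * 2^(2*n) := Nat.mul_le_mul (Nat.pow_le_pow_right (by omega) (by omega))
              (Nat.pow_le_pow_right (by omega) (by omega))
          _ = 8^n := by
              rw [← pow_add, show n + 2*n = 3*n by ring, pow_mul]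
              norm_num
    _ = n * 8^n := by simp [Finset.sum_const, mul_comm]

lemma term_ratio {n k : ℕ} (hn : 1 ≤ n) (hk : k < n) :
    n.choose k * (n+1+k).choose k ≤ 2*n * ((n-1).choose k * (n+k).choose k) := by
  have I1 : (n-1).choose k * n = n.choose k * (n - k) := by
    have := Nat.choose_mul_succ_eq (n-1) k
    have hn1 : n - 1 + 1 = n := by omega
    rw [hn1] at this
    exact this
  have I2 : (n+k).choose k * (n+1+k) = (n+1+k).choose k * (n+1) := by
    have := Nat.choose_mul_succ_eq (n+k) k
    have h1 : n + k + 1 - k = n + 1 := by omega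
    rw [h1] at this
    calc (n+k).choose k * (n+1+k) = (n+k).choose k * (n+k+1) := by ring_nf
      _ = (n+k+1).choose k * (n+1) := this
      _ = (n+1+k).choose k * (n+1) := by rw [show n+k+1 = n+1+k by omega]
  have key : (n.choose k * (n+1+k).choose k) * ((n-k) * (n+1))
      = ((n-1).choose k * (n+k).choose k) * (n * (n+1+k)) := by
    calc (n.choose k * (n+1+k).choose k) * ((n-k) * (n+1))
        = (n.choose k * (n-k)) * ((n+1+k).choose k * (n+1)) := by ring
      _ = ((n-1).choose k * n) * ((n+k).choose k * (n+1+k)) := by rw [← I1, ← I2]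
      _ = ((n-1).choose k * (n+k).choose k) * (n * (n+1+k)) := by ring
  have h3 : (n.choose k * (n+1+k).choose k) * (n+1)
      ≤ (2*n * ((n-1).choose k * (n+k).choose k)) * (n+1) := by
    calc (n.choose k * (n+1+k).choose k) * (n+1)
        ≤ (n.choose k * (n+1+k).choose k) * ((n-k) * (n+1)) := by
          apply Nat.mul_le_mul_left
          exact Nat.le_mul_of_pos_left _ (by omega)
      _ = ((n-1).choose k * (n+k).choose k) * (n * (n+1+k)) := key
      _ ≤ ((n-1).choose k * (n+k).choose k) * (n * (2*(n+1))) := by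
          apply Nat.mul_le_mul_left
          apply Nat.mul_le_mul_left
          omega
      _ = (2*n * ((n-1).choose k * (n+k).choose k)) * (n+1) := by ring
  exact Nat.le_of_mul_le_mul_right h3 (by omega)

lemma E_succ_le {n : ℕ} (hn : 4 ≤ n) : E (n+1) ≤ 4*n * E n := by
  have hE : E (n+1) = (∑ k ∈ range n, n.choose k * (n+1+k).choose k)
      + n.choose n * (n+1+n).choose n := by
    rw [E]
    rw [Finset.sum_range_succ]
    congr 1
  have h1 : ∑ k ∈ range n, n.choose k * (n+1+k).choose k ≤ 2*n * E n := by
    calc ∑ k ∈ range n, n.choose k * (n+1+k).choose k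
        ≤ ∑ k ∈ range n, 2*n * ((n-1).choose k * (n+k).choose k) := by
          apply Finset.sum_le_sum
          intro k hk
          exact term_ratio (by omega) (Finset.mem_range.mp hk)
      _ = 2*n * E n := by rw [← Finset.mul_sum]; rfl
  have h2 : n.choose n * (n+1+n).choose n ≤ 2*n * E n := by
    rw [Nat.choose_self, one_mul]
    have h3 : n+1+n = 2*n+1 := by omega
    rw [h3]
    calc (2*n+1).choose n ≤ 4^n := Nat.choose_middle_le_pow n
      _ ≤ 2*n * E n := four_pow_le hn
  calc E (n+1) = _ + _ := hE
    _ ≤ 2*n*E n + 2*n*E n := Nat.add_le_add h1 h2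
    _ = 4*n*E n := by ring

noncomputable def a (n : ℕ) : ℝ :=
  (1 / (n : ℝ)) * ∑ k ∈ Finset.range n,
    ((n - 1).choose k : ℝ) ^ 2 * ((n + k).choose k : ℝ) ^ 2 / (4 * (k : ℝ) ^ 2 - 1)

lemma a_le {n : ℕ} (hn : 1 ≤ n) : a n ≤ (E n : ℝ)^2 := by
  have hterm : ∀ k ∈ range n,
      ((n - 1).choose k : ℝ) ^ 2 * ((n + k).choose k : ℝ) ^ 2 / (4 * (k : ℝ) ^ 2 - 1)
      ≤ (((n-1).choose k * (n+k).choose k : ℕ) : ℝ) * (E n : ℝ) := by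
    intro k hk
    have hle : (((n-1).choose k * (n+k).choose k : ℕ) : ℝ) ≤ (E n : ℝ) := by
      exact_mod_cast Nat.cast_le.mpr (Finset.single_le_sum
        (f := fun k => (n-1).choose k * (n+k).choose k) (fun i _ => Nat.zero_le _) hk)
    have hnum : ((n - 1).choose k : ℝ) ^ 2 * ((n + k).choose k : ℝ) ^ 2
        = (((n-1).choose k * (n+k).choose k : ℕ) : ℝ)^2 := by
      push_cast
      ring
    rcases Nat.eq_zero_or_pos k with rfl | hk1
    · have : (4 * ((0:ℕ) : ℝ) ^ 2 - 1) = -1 := by norm_num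
      rw [this, hnum, div_neg, div_one]
      have := sq_nonneg (((n-1).choose 0 * (n+0).choose 0 : ℕ) : ℝ)
      nlinarith [Nat.cast_nonneg (α := ℝ) ((n-1).choose 0 * (n+0).choose 0),
        Nat.cast_nonneg (α := ℝ) (E n), hle]
    · have hden : (1:ℝ) ≤ 4 * (k : ℝ) ^ 2 - 1 := by
        have : (1:ℝ) ≤ (k:ℝ) := by exact_mod_cast hk1
        nlinarith
      rw [hnum]
      calc (((n-1).choose k * (n+k).choose k : ℕ) : ℝ)^2 / (4 * (k : ℝ) ^ 2 - 1)
          ≤ (((n-1).choose k * (n+k).choose k : ℕ) : ℝ)^2 / 1 :=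
            div_le_div_of_nonneg_left (sq_nonneg _) one_pos hden
        _ = (((n-1).choose k * (n+k).choose k : ℕ) : ℝ)^2 := div_one _
        _ ≤ (((n-1).choose k * (n+k).choose k : ℕ) : ℝ) * (E n : ℝ) := by
            rw [sq]
            exact mul_le_mul_of_nonneg_left hle (Nat.cast_nonneg _)
  have hsum : ∑ k ∈ range n,
      ((n - 1).choose k : ℝ) ^ 2 * ((n + k).choose k : ℝ) ^ 2 / (4 * (k : ℝ) ^ 2 - 1)
      ≤ (E n : ℝ)^2 := by
    calc ∑ k ∈ range n, ((n - 1).choose k : ℝ) ^ 2 * ((n + k).choose k : ℝ) ^ 2 / (4 * (k : ℝ) ^ 2 - 1)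
        ≤ ∑ k ∈ range n, (((n-1).choose k * (n+k).choose k : ℕ) : ℝ) * (E n : ℝ) :=
          Finset.sum_le_sum hterm
      _ = (∑ k ∈ range n, (((n-1).choose k * (n+k).choose k : ℕ) : ℝ)) * (E n : ℝ) :=
          (Finset.sum_mul _ _ _).symm
      _ = (E n : ℝ) * (E n : ℝ) := by
          rw [show (∑ k ∈ range n, (((n-1).choose k * (n+k).choose k : ℕ) : ℝ)) = ((E n : ℕ) : ℝ) by
            rw [E]; push_cast; ring]
      _ = (E n : ℝ)^2 := (sq _).symm
  rw [a]
  have h1n : 0 < (1 / (n:ℝ)) := by positivity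
  have h1n' : (1 / (n:ℝ)) ≤ 1 := by
    rw [div_le_one (by exact_mod_cast hn : (0:ℝ) < n)]
    exact_mod_cast hn
  rcases le_or_gt 0 (∑ k ∈ range n,
      ((n - 1).choose k : ℝ) ^ 2 * ((n + k).choose k : ℝ) ^ 2 / (4 * (k : ℝ) ^ 2 - 1)) with hS | hS
  · calc (1 / (n:ℝ)) * _ ≤ 1 * _ := mul_le_mul_of_nonneg_right h1n' hS
      _ ≤ (E n : ℝ)^2 := by rw [one_mul]; exact hsum
  · calc (1 / (n:ℝ)) * _ ≤ (1 / (n:ℝ)) * 0 := mul_le_mul_of_nonneg_left hS.le h1n.le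
      _ = 0 := mul_zero _
      _ ≤ (E n : ℝ)^2 := sq_nonneg _

lemma le_a {n : ℕ} (hn : 7 ≤ n) : (E n : ℝ)^2 / (32 * (n:ℝ)^5) ≤ a n := by
  set N : ℝ := (n : ℝ) with hNdef
  have hN : (7:ℝ) ≤ N := by
    show (7:ℝ) ≤ (n:ℝ)
    exact_mod_cast hn
  have hN0 : (0:ℝ) < N := by linarith
  set e : ℝ := (E n : ℝ) with hedef
  have he : 6 * N^2 ≤ e := by
    have := six_sq_le_E hn
    rw [hedef, hNdef]
    exact_mod_cast this
  have he2 : (2:ℝ) ≤ e := by nlinarith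
  -- pigeonhole
  have hP : ∑ k ∈ Finset.Ico 1 n, (n-1).choose k * (n+k).choose k + 1 = E n := by
    rw [E, Finset.range_eq_Ico, Finset.sum_eq_sum_Ico_succ_bot (by omega : 0 < n)]
    simp [add_comm]
  obtain ⟨k₀, hk₀mem, hk₀⟩ : ∃ k ∈ Finset.Ico 1 n,
      (∑ j ∈ Finset.Ico 1 n, (n-1).choose j * (n+j).choose j)
        ≤ (n-1) * ((n-1).choose k * (n+k).choose k) := by
    apply Finset.exists_le_of_sum_le
    · exact ⟨1, by simp; omega⟩
    · simp only [Finset.sum_const, Nat.card_Ico, smul_eq_mul, Finset.mul_sum]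
      exact le_refl _
  obtain ⟨hk₀1, hk₀n⟩ := Finset.mem_Ico.mp hk₀mem
  set c : ℝ := (((n-1).choose k₀ * (n+k₀).choose k₀ : ℕ) : ℝ) with hcdef
  have hc0 : 0 ≤ c := Nat.cast_nonneg _
  have hecN : e - 1 ≤ N * c := by
    have h1 : E n ≤ 1 + n * ((n-1).choose k₀ * (n+k₀).choose k₀) := by
      have h2 : (n-1) * ((n-1).choose k₀ * (n+k₀).choose k₀)
          ≤ n * ((n-1).choose k₀ * (n+k₀).choose k₀) :=
        Nat.mul_le_mul_right _ (by omega)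
      omega
    have := (Nat.cast_le (α := ℝ)).mpr h1
    push_cast at this
    rw [hedef, hNdef, hcdef]
    push_cast
    linarith [this]
  have hc2 : e / (2*N) ≤ c := by
    rw [div_le_iff₀ (by positivity)]
    nlinarith
  set K : ℝ := (k₀ : ℝ) with hKdef
  have hK1 : (1:ℝ) ≤ K := by
    show (1:ℝ) ≤ (k₀:ℝ)
    exact_mod_cast hk₀1
  have hKN : K ≤ N := by
    rw [hKdef, hNdef]
    exact_mod_cast hk₀n.le
  have hden_pos : (0:ℝ) < 4 * K^2 - 1 := by nlinarith
  have hden_le : 4 * K^2 - 1 ≤ 4 * N^2 := by nlinarith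
  -- the k₀ term
  have hterm : e^2 / (16 * N^4) ≤ c^2 / (4*K^2 - 1) := by
    have h3 : e^2 / (16 * N^4) = (e/(2*N))^2 / (4*N^2) := by
      field_simp
      ring
    have h4 : (e/(2*N))^2 ≤ c^2 := by
      apply pow_le_pow_left₀ (by positivity) hc2
    calc e^2 / (16*N^4) = (e/(2*N))^2 / (4*N^2) := h3
      _ ≤ c^2 / (4*N^2) := by
          apply div_le_div_of_nonneg_right h4 (by positivity)
      _ ≤ c^2 / (4*K^2 - 1) := div_le_div_of_nonneg_left (sq_nonneg _) hden_pos hden_le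
  -- sum decomposition
  have hsum : ∑ k ∈ Finset.range n,
      ((n - 1).choose k : ℝ) ^ 2 * ((n + k).choose k : ℝ) ^ 2 / (4 * (k : ℝ) ^ 2 - 1)
      = -1 + ∑ k ∈ Finset.Ico 1 n,
      ((n - 1).choose k : ℝ) ^ 2 * ((n + k).choose k : ℝ) ^ 2 / (4 * (k : ℝ) ^ 2 - 1) := by
    rw [Finset.range_eq_Ico, Finset.sum_eq_sum_Ico_succ_bot (by omega : 0 < n)]
    norm_num
  have htail : c^2 / (4*K^2 - 1) ≤ ∑ k ∈ Finset.Ico 1 n,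
      ((n - 1).choose k : ℝ) ^ 2 * ((n + k).choose k : ℝ) ^ 2 / (4 * (k : ℝ) ^ 2 - 1) := by
    have heq : c^2 / (4*K^2 - 1)
        = ((n - 1).choose k₀ : ℝ) ^ 2 * ((n + k₀).choose k₀ : ℝ) ^ 2 / (4 * (k₀ : ℝ) ^ 2 - 1) := by
      rw [hcdef, hKdef]
      push_cast
      ring_nf
    rw [heq]
    apply Finset.single_le_sum (f := fun k =>
      ((n - 1).choose k : ℝ) ^ 2 * ((n + k).choose k : ℝ) ^ 2 / (4 * (k : ℝ) ^ 2 - 1)) _ hk₀mem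
    intro i hi
    have hi1 : 1 ≤ i := (Finset.mem_Ico.mp hi).1
    have : (0:ℝ) < 4 * (i:ℝ)^2 - 1 := by
      have : (1:ℝ) ≤ (i:ℝ) := by exact_mod_cast hi1
      nlinarith
    positivity
  have he0 : (0:ℝ) ≤ e := by linarith
  have h8 : (1:ℝ) ≤ e^2 / (32 * N^4) := by
    rw [le_div_iff₀ (by positivity)]
    have h36 : (6*N^2)*(6*N^2) ≤ e*e :=
      mul_le_mul he he (by positivity) he0
    have hN4 : (0:ℝ) ≤ N^4 := by positivity
    calc 1*(32*N^4) = 32*N^4 := one_mul _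
      _ ≤ 36*N^4 := by linarith
      _ = (6*N^2)*(6*N^2) := by ring
      _ ≤ e*e := h36
      _ = e^2 := (sq e).symm
  have hS : e^2 / (32 * N^4) ≤ ∑ k ∈ Finset.range n,
      ((n - 1).choose k : ℝ) ^ 2 * ((n + k).choose k : ℝ) ^ 2 / (4 * (k : ℝ) ^ 2 - 1) := by
    rw [hsum]
    have hid : e^2 / (16*N^4) = e^2/(32*N^4) + e^2/(32*N^4) := by ring
    linarith [hterm.trans htail]
  rw [a]
  calc e^2 / (32 * N^5) = (1/N) * (e^2 / (32 * N^4)) := by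
        field_simp
    _ ≤ (1/N) * _ := mul_le_mul_of_nonneg_left hS (by positivity)

open Real Filter

lemma log_const_bounds : Real.log 4 ≤ (1.4:ℝ) ∧ Real.log 8 ≤ (2.1:ℝ) ∧ Real.log 32 ≤ (3.5:ℝ) := by
  have h2 := Real.log_two_lt_d9
  have h4 : Real.log 4 = 2 * Real.log 2 := by
    rw [show (4:ℝ) = 2^2 by norm_num, Real.log_pow]
    push_cast; ring
  have h8 : Real.log 8 = 3 * Real.log 2 := by
    rw [show (8:ℝ) = 2^3 by norm_num, Real.log_pow]
    push_cast; ring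
  have h32 : Real.log 32 = 5 * Real.log 2 := by
    rw [show (32:ℝ) = 2^5 by norm_num, Real.log_pow]
    push_cast; ring
  refine ⟨?_, ?_, ?_⟩ <;> [rw [h4]; rw [h8]; rw [h32]] <;> linarith

lemma abs_log_a_le {n : ℕ} (hn : 7 ≤ n) : |Real.log (a n)| ≤ 8 * (n:ℝ) := by
  obtain ⟨hl4, hl8, hl32⟩ := log_const_bounds
  set N : ℝ := (n:ℝ) with hNdef
  have hN : (7:ℝ) ≤ N := by show (7:ℝ) ≤ (n:ℝ); exact_mod_cast hn
  have hN0 : (0:ℝ) < N := by linarith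
  set e : ℝ := (E n : ℝ) with hedef
  have he1 : (1:ℝ) ≤ e := by show (1:ℝ) ≤ ((E n : ℕ):ℝ); exact_mod_cast one_le_E (by omega)
  have he0 : (0:ℝ) < e := by linarith
  have hlb : e^2/(32*N^5) ≤ a n := le_a hn
  have hub : a n ≤ e^2 := a_le (by omega)
  have hpos : 0 < a n := lt_of_lt_of_le (by positivity) hlb
  have hE_le : e ≤ N * (8:ℝ)^n := by
    have := E_le n
    show ((E n : ℕ):ℝ) ≤ (n:ℝ) * (8:ℝ)^n
    exact_mod_cast this
  have hlogN : Real.log N ≤ N := (Real.log_le_sub_one_of_pos hN0).trans (by linarith)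
  have hlogN0 : 0 ≤ Real.log N := Real.log_nonneg (by linarith)
  rw [abs_le]
  constructor
  · -- -(8N) ≤ log a n
    have h1 : Real.log (e^2/(32*N^5)) ≤ Real.log (a n) :=
      Real.log_le_log (by positivity) hlb
    have h2 : Real.log (e^2/(32*N^5)) = 2*Real.log e - (Real.log 32 + 5*Real.log N) := by
      rw [Real.log_div (by positivity) (by positivity), Real.log_pow,
        Real.log_mul (by norm_num) (by positivity), Real.log_pow]
      push_cast; ring
    have hle0 : 0 ≤ Real.log e := Real.log_nonneg he1
    have : -(8*N) ≤ 2*Real.log e - (Real.log 32 + 5*Real.log N) := by nlinarith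
    linarith [h1, h2 ▸ this]
  · -- log a n ≤ 8N
    have h1 : Real.log (a n) ≤ Real.log (e^2) := Real.log_le_log hpos hub
    have h2 : Real.log (e^2) = 2 * Real.log e := by rw [Real.log_pow]; push_cast; ring
    have h3 : Real.log e ≤ Real.log (N * (8:ℝ)^n) := Real.log_le_log he0 hE_le
    have h4 : Real.log (N * (8:ℝ)^n) = Real.log N + (n:ℝ) * Real.log 8 := by
      rw [Real.log_mul (by positivity) (by positivity), Real.log_pow]
    have h5 : Real.log e ≤ N + N * 2.1 := by
      rw [h4] at h3
      have : (n:ℝ) * Real.log 8 ≤ N * 2.1 :=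
        mul_le_mul_of_nonneg_left hl8 (by positivity)
      linarith
    linarith [h1, h2 ▸ h1]

lemma abs_log_diff_le {n : ℕ} (hn : 7 ≤ n) :
    |Real.log (a (n+1)) - Real.log (a n)| ≤ 7 * Real.log ((n:ℝ)+1) + 7 := by
  obtain ⟨hl4, hl8, hl32⟩ := log_const_bounds
  set N : ℝ := (n:ℝ) with hNdef
  have hN : (7:ℝ) ≤ N := by show (7:ℝ) ≤ (n:ℝ); exact_mod_cast hn
  have hN0 : (0:ℝ) < N := by linarith
  set e : ℝ := (E n : ℝ) with hedef
  set e' : ℝ := (E (n+1) : ℝ) with he'def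
  have he1 : (1:ℝ) ≤ e := by show (1:ℝ) ≤ ((E n : ℕ):ℝ); exact_mod_cast one_le_E (by omega)
  have he1' : (1:ℝ) ≤ e' := by
    show (1:ℝ) ≤ ((E (n+1) : ℕ):ℝ); exact_mod_cast one_le_E (by omega)
  have he0 : (0:ℝ) < e := by linarith
  have he0' : (0:ℝ) < e' := by linarith
  have hmono : e ≤ e' := by
    show ((E n : ℕ):ℝ) ≤ ((E (n+1) : ℕ):ℝ); exact_mod_cast E_mono n
  have hratio : e' ≤ 4 * N * e := by
    have := E_succ_le (n := n) (by omega)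
    show ((E (n+1) : ℕ):ℝ) ≤ 4 * (n:ℝ) * ((E n : ℕ):ℝ)
    push_cast
    exact_mod_cast this
  have hlb : e^2/(32*N^5) ≤ a n := le_a hn
  have hub : a n ≤ e^2 := a_le (by omega)
  have hlb' : e'^2/(32*(N+1)^5) ≤ a (n+1) := by
    have := le_a (n := n+1) (by omega)
    have hc : ((n+1 : ℕ):ℝ) = N + 1 := by push_cast; ring
    rwa [hc] at this
  have hub' : a (n+1) ≤ e'^2 := a_le (by omega)
  have hpos : 0 < a n := lt_of_lt_of_le (by positivity) hlb
  have hpos' : 0 < a (n+1) := lt_of_lt_of_le (by positivity) hlb'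
  have hlogN0 : 0 ≤ Real.log N := Real.log_nonneg (by linarith)
  have hlogN1 : Real.log N ≤ Real.log (N+1) := Real.log_le_log hN0 (by linarith)
  have hlogN1' : 0 ≤ Real.log (N+1) := Real.log_nonneg (by linarith)
  -- upper bound on log a (n+1)
  have hA1 : Real.log (a (n+1)) ≤ 2 * Real.log e' := by
    have h1 : Real.log (a (n+1)) ≤ Real.log (e'^2) := Real.log_le_log hpos' hub'
    rwa [Real.log_pow, Nat.cast_ofNat] at h1
  have hA2 : Real.log (a n) ≤ 2 * Real.log e := by
    have h1 : Real.log (a n) ≤ Real.log (e^2) := Real.log_le_log hpos hub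
    rwa [Real.log_pow, Nat.cast_ofNat] at h1
  have hB1 : 2*Real.log e - (Real.log 32 + 5*Real.log N) ≤ Real.log (a n) := by
    have h1 : Real.log (e^2/(32*N^5)) ≤ Real.log (a n) :=
      Real.log_le_log (by positivity) hlb
    have h2 : Real.log (e^2/(32*N^5)) = 2*Real.log e - (Real.log 32 + 5*Real.log N) := by
      rw [Real.log_div (by positivity) (by positivity), Real.log_pow,
        Real.log_mul (by norm_num) (by positivity), Real.log_pow]
      push_cast; ring
    linarith [h2 ▸ h1]
  have hB1' : 2*Real.log e' - (Real.log 32 + 5*Real.log (N+1)) ≤ Real.log (a (n+1)) := by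
    have h1 : Real.log (e'^2/(32*(N+1)^5)) ≤ Real.log (a (n+1)) :=
      Real.log_le_log (by positivity) hlb'
    have h2 : Real.log (e'^2/(32*(N+1)^5)) = 2*Real.log e' - (Real.log 32 + 5*Real.log (N+1)) := by
      rw [Real.log_div (by positivity) (by positivity), Real.log_pow,
        Real.log_mul (by norm_num) (by positivity), Real.log_pow]
      push_cast; ring
    linarith [h2 ▸ h1]
  have hC : Real.log e' ≤ Real.log 4 + Real.log N + Real.log e := by
    have h1 : Real.log e' ≤ Real.log (4*N*e) := Real.log_le_log he0' hratio
    have h2 : Real.log (4*N*e) = Real.log 4 + Real.log N + Real.log e := by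
      rw [Real.log_mul (by positivity) (by positivity),
        Real.log_mul (by norm_num) (by positivity)]
    linarith [h2 ▸ h1]
  have hD : Real.log e ≤ Real.log e' := Real.log_le_log he0 hmono
  rw [abs_le]
  constructor
  · -- lower
    have : Real.log (a (n+1)) - Real.log (a n)
        ≥ -(Real.log 32 + 5*Real.log (N+1)) := by
      linarith [hB1', hD, hA2]
    linarith [hlogN1', this, hl32]
  · -- upper
    have h1 : Real.log (a (n+1)) - Real.log (a n)
        ≤ 2*(Real.log 4 + Real.log N + Real.log e) - (2*Real.log e - (Real.log 32 + 5*Real.log N)) := by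
      linarith [hA1, hC, hB1]
    have h2 : 2*(Real.log 4 + Real.log N + Real.log e) - (2*Real.log e - (Real.log 32 + 5*Real.log N))
        = 2*Real.log 4 + Real.log 32 + 7*Real.log N := by ring
    linarith [hlogN1, h1, h2 ▸ h1, hl4, hl32, hlogN1']

theorem a_log_diff_tendsto_zero :
    Filter.Tendsto
      (fun n : ℕ => Real.log (a (n + 1)) / ((n : ℝ) + 1) - Real.log (a n) / (n : ℝ))
      Filter.atTop (nhds 0) := by
  -- the dominating sequence
  have hg : Filter.Tendsto (fun n : ℕ => (7 * Real.log ((n:ℝ)+1) + 15) / ((n:ℝ)+1))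
      Filter.atTop (nhds 0) := by
    have h1 : Filter.Tendsto (fun x : ℝ => Real.log x / x) Filter.atTop (nhds 0) := by
      simpa using Real.isLittleO_log_id_atTop.tendsto_div_nhds_zero
    have h2 : Filter.Tendsto (fun n : ℕ => (n:ℝ) + 1) Filter.atTop Filter.atTop :=
      Filter.tendsto_atTop_add_const_right _ 1 tendsto_natCast_atTop_atTop
    have h3 : Filter.Tendsto (fun n : ℕ => Real.log ((n:ℝ)+1) / ((n:ℝ)+1))
        Filter.atTop (nhds 0) := h1.comp h2
    have h4 := tendsto_one_div_add_atTop_nhds_zero_nat (𝕜 := ℝ)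
    have h5 := (h3.const_mul (7:ℝ)).add (h4.const_mul (15:ℝ))
    simp only [mul_zero, add_zero] at h5
    convert h5 using 2 with n
    field_simp
  apply squeeze_zero_norm' _ hg
  filter_upwards [Filter.eventually_ge_atTop 7] with n hn
  set N : ℝ := (n:ℝ) with hNdef
  have hN : (7:ℝ) ≤ N := by show (7:ℝ) ≤ (n:ℝ); exact_mod_cast hn
  have hN0 : (0:ℝ) < N := by linarith
  have hd := abs_log_diff_le hn
  have hA := abs_log_a_le hn
  have hlog1 : 0 ≤ Real.log (N+1) := Real.log_nonneg (by linarith)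
  rw [Real.norm_eq_abs]
  have hid : Real.log (a (n+1)) / (N+1) - Real.log (a n) / N
      = (Real.log (a (n+1)) - Real.log (a n)) / (N+1) - Real.log (a n) / (N*(N+1)) := by
    field_simp
    ring
  rw [hid]
  have htri : |(Real.log (a (n+1)) - Real.log (a n)) / (N+1) - Real.log (a n) / (N*(N+1))|
      ≤ |Real.log (a (n+1)) - Real.log (a n)| / (N+1) + |Real.log (a n)| / (N*(N+1)) := by
    have h := abs_add_le ((Real.log (a (n+1)) - Real.log (a n)) / (N+1))
      (-(Real.log (a n) / (N*(N+1))))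
    rw [abs_neg] at h
    calc |(Real.log (a (n+1)) - Real.log (a n)) / (N+1) - Real.log (a n) / (N*(N+1))|
        = |(Real.log (a (n+1)) - Real.log (a n)) / (N+1) + -(Real.log (a n) / (N*(N+1)))| := by
          rw [sub_eq_add_neg]
      _ ≤ |(Real.log (a (n+1)) - Real.log (a n)) / (N+1)| + |Real.log (a n) / (N*(N+1))| := h
      _ = |Real.log (a (n+1)) - Real.log (a n)| / (N+1) + |Real.log (a n)| / (N*(N+1)) := by
          rw [abs_div, abs_div, abs_of_pos (by linarith : (0:ℝ) < N+1),
            abs_of_pos (by positivity : (0:ℝ) < N*(N+1))]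
  calc |(Real.log (a (n+1)) - Real.log (a n)) / (N+1) - Real.log (a n) / (N*(N+1))|
      ≤ |Real.log (a (n+1)) - Real.log (a n)| / (N+1) + |Real.log (a n)| / (N*(N+1)) := htri
    _ ≤ (7 * Real.log (N+1) + 7) / (N+1) + (8*N) / (N*(N+1)) := by
        apply add_le_add
        · exact div_le_div_of_nonneg_right hd (by linarith)
        · exact div_le_div_of_nonneg_right hA (by positivity)
    _ = (7 * Real.log (N+1) + 15) / (N+1) := by
        field_simp
        ring
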